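/- arXiv:1401.0265 — 2 statements merged into one kernel-verified Lean document; each statement's English description precedes it below -/
import Mathlib

section
/- Let n ≥ 1 and for each 1 ≤ i ≤ n let p_i : (ℝ^{d_y})^{i-1} × ℝ^{d_y} → [0,∞) be jointly measurable, such that for each fixed y_{1:i-1} ∈ (ℝ^{d_y})^{i-1} the map y ↦ p_i(y_{1:i-1}, y) is an integrable probability density on ℝ^{d_y}. For ε > 0 define p_i^ε(y_i | y_{1:i-1}) := λ(B(y_i,ε))^{-1} ∫_{B(y_i,ε)} p_i(y_{1:i-1}, u) du. Then for Lebesgue-almost every (y_1, …, y_n) ∈ (ℝ^{d_y})^n, lim_{ε→0} ∏_{i=1}^n p_i^ε(y_i | y_{1:i-1}) = ∏_{i=1}^n p_i(y_{1:i-1}, y_i). -/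
open MeasureTheory Filter Metric

open scoped Topology ENNReal

lemma abc_ball_ae_closedBall (dy : ℕ) (x : EuclideanSpace ℝ (Fin dy)) {ε : ℝ} (hε : 0 < ε) :
    (Metric.ball x ε : Set (EuclideanSpace ℝ (Fin dy))) =ᵐ[volume] Metric.closedBall x ε := by
  rw [MeasureTheory.ae_eq_set]
  constructor
  · rw [Set.diff_eq_empty.2 Metric.ball_subset_closedBall]; simp
  · rw [Metric.closedBall_diff_ball]
    exact Measure.addHaar_sphere_of_ne_zero volume x hε.ne'

lemma abc_ae_tendsto_closedBall_avg (dy : ℕ) {f : EuclideanSpace ℝ (Fin dy) → ℝ}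
    (hf : Integrable f) :
    ∀ᵐ b ∂(volume : Measure (EuclideanSpace ℝ (Fin dy))),
      Tendsto (fun r : ℝ => ⨍ u in Metric.closedBall b r, |f u - f b|) (𝓝[>] 0) (𝓝 0) := by
  filter_upwards [(Besicovitch.vitaliFamily
      (volume : Measure (EuclideanSpace ℝ (Fin dy)))).ae_tendsto_average_norm_sub
      hf.locallyIntegrable] with b hb
  have := hb.comp (Besicovitch.tendsto_filterAt volume b)
  simpa [Function.comp_def, Real.norm_eq_abs] using this

lemma abc_key (dy : ℕ) {α : Type} [MeasurableSpace α] (μ : Measure α) [SigmaFinite μ]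
    (g : α → EuclideanSpace ℝ (Fin dy) → ℝ)
    (hg : Measurable fun q : α × EuclideanSpace ℝ (Fin dy) => g q.1 q.2)
    (hgint : ∀ a, Integrable (g a)) :
    ∀ᵐ z : α × EuclideanSpace ℝ (Fin dy) ∂ μ.prod volume,
      Tendsto (fun ε : ℝ => (volume (Metric.ball z.2 ε)).toReal⁻¹ *
          ∫ u in Metric.ball z.2 ε, g z.1 u)
        (𝓝[>] 0) (𝓝 (g z.1 z.2)) := by
  classical
  set Φ : ℝ → α × EuclideanSpace ℝ (Fin dy) → ℝ≥0∞ := fun q z =>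
    (volume (Metric.ball z.2 q))⁻¹ *
      ∫⁻ u in Metric.ball z.2 q, ENNReal.ofReal |g z.1 u - g z.1 z.2| with hΦdef
  have hΦmeas : ∀ q : ℝ, Measurable (Φ q) := by
    intro q
    apply Measurable.mul
    · have : (fun z : α × EuclideanSpace ℝ (Fin dy) => (volume (Metric.ball z.2 q))⁻¹) =
          fun _ => (volume (Metric.ball (0 : EuclideanSpace ℝ (Fin dy)) q))⁻¹ := by
        funext z; rw [Measure.addHaar_ball_center]
      rw [this]; exact measurable_const
    · set F : (α × EuclideanSpace ℝ (Fin dy)) × EuclideanSpace ℝ (Fin dy) → ℝ≥0∞ :=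
        fun w => if dist w.2 w.1.2 < q then ENNReal.ofReal |g w.1.1 w.2 - g w.1.1 w.1.2| else 0
        with hFdef
      have hF : Measurable F := by
        apply Measurable.ite
        · exact measurableSet_lt (measurable_snd.dist (measurable_fst.snd)) measurable_const
        · exact ENNReal.measurable_ofReal.comp
            (((hg.comp (measurable_fst.fst.prodMk measurable_snd)).sub
              (hg.comp measurable_fst)).abs)
        · exact measurable_const
      have hrw : (fun z : α × EuclideanSpace ℝ (Fin dy) =>
          ∫⁻ u in Metric.ball z.2 q, ENNReal.ofReal |g z.1 u - g z.1 z.2|) =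
          fun z => ∫⁻ u, F (z, u) := by
        funext z
        rw [← lintegral_indicator measurableSet_ball]
        refine lintegral_congr fun u => ?_
        simp [hFdef, Set.indicator_apply, Metric.mem_ball]
      rw [hrw]
      exact hF.lintegral_prod_right'
  set S : ℕ → α × EuclideanSpace ℝ (Fin dy) → ℝ≥0∞ := fun m z =>
    ⨆ q : {q : ℚ // 0 < (q : ℝ) ∧ (q : ℝ) < 1 / (m + 1)}, Φ (q : ℝ) z with hSdef
  have hSmeas : ∀ m, Measurable (S m) := fun m => Measurable.iSup fun q => hΦmeas _
  set G : α × EuclideanSpace ℝ (Fin dy) → ℝ≥0∞ := fun z => ⨅ m : ℕ, S m z with hGdef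
  have hGmeas : Measurable G := Measurable.iInf hSmeas
  -- slices are a.e. zero
  have claim1 : ∀ a, ∀ᵐ b ∂(volume : Measure (EuclideanSpace ℝ (Fin dy))), G (a, b) = 0 := by
    intro a
    filter_upwards [abc_ae_tendsto_closedBall_avg dy (hgint a)] with b hb
    refine le_antisymm ?_ zero_le
    refine ENNReal.le_of_forall_pos_le_add fun η hη _ => ?_
    rw [zero_add]
    have hη' : (0 : ℝ) < η := hη
    obtain ⟨δ, hδ0, hδ⟩ : ∃ δ, 0 < δ ∧ ∀ r ∈ Set.Ioo (0:ℝ) δ,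
        ⨍ u in Metric.closedBall b r, |g a u - g a b| < η := by
      have hev := hb.eventually (gt_mem_nhds hη')
      rcases (nhdsGT_basis_of_exists_gt ⟨1, one_pos⟩).eventually_iff.1 hev with ⟨δ, hδ0, h⟩
      exact ⟨δ, hδ0, fun r hr => h hr⟩
    obtain ⟨m, hm⟩ := exists_nat_one_div_lt hδ0
    have step : G (a, b) ≤ S m (a, b) := iInf_le _ m
    refine step.trans ?_
    refine iSup_le fun q => ?_
    obtain ⟨hq0, hq1⟩ := q.2
    have hqδ : (q.1 : ℝ) < δ := hq1.trans hm
    have hInt : IntegrableOn (fun u => |g a u - g a b|)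
        (Metric.closedBall b (q.1 : ℝ)) volume :=
      (((hgint a).integrableOn).sub (integrableOn_const measure_closedBall_lt_top.ne)).abs
    have hvol_pos : (0 : ℝ≥0∞) < volume (Metric.closedBall b (q.1 : ℝ)) :=
      measure_closedBall_pos _ _ hq0
    have hvol_top : volume (Metric.closedBall b (q.1 : ℝ)) ≠ ⊤ := measure_closedBall_lt_top.ne
    have h1 : (∫⁻ u in Metric.ball b (q.1 : ℝ), ENNReal.ofReal |g a u - g a b|) =
        ∫⁻ u in Metric.closedBall b (q.1 : ℝ), ENNReal.ofReal |g a u - g a b| :=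
      setLIntegral_congr (abc_ball_ae_closedBall dy b hq0)
    have h2 : (∫⁻ u in Metric.closedBall b (q.1 : ℝ), ENNReal.ofReal |g a u - g a b|) =
        ENNReal.ofReal (∫ u in Metric.closedBall b (q.1 : ℝ), |g a u - g a b|) :=
      (ofReal_integral_eq_lintegral_ofReal hInt
        (Filter.Eventually.of_forall fun u => abs_nonneg _)).symm
    have hball : volume (Metric.ball b (q.1 : ℝ)) = volume (Metric.closedBall b (q.1 : ℝ)) :=
      measure_congr (abc_ball_ae_closedBall dy b hq0)
    have hinv : (volume (Metric.closedBall b (q.1 : ℝ)))⁻¹ =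
        ENNReal.ofReal ((volume (Metric.closedBall b (q.1 : ℝ))).toReal⁻¹) := by
      rw [ENNReal.ofReal_inv_of_pos (ENNReal.toReal_pos hvol_pos.ne' hvol_top),
        ENNReal.ofReal_toReal hvol_top]
    have hΦeq : Φ (q.1 : ℝ) (a, b) =
        ENNReal.ofReal (⨍ u in Metric.closedBall b (q.1 : ℝ), |g a u - g a b|) := by
      rw [hΦdef]
      simp only
      rw [hball, h1, h2, hinv, ← ENNReal.ofReal_mul (by positivity), setAverage_eq,
        smul_eq_mul]
      rfl
    rw [hΦeq, ← ENNReal.ofReal_coe_nnreal]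
    exact ENNReal.ofReal_le_ofReal (hδ _ ⟨hq0, hqδ⟩).le
  -- upgrade to the product measure
  have hae : ∀ᵐ z ∂ μ.prod volume, G z = 0 := by
    rw [ae_iff]
    have hset : MeasurableSet {z : α × EuclideanSpace ℝ (Fin dy) | ¬ G z = 0} :=
      (hGmeas (measurableSet_singleton 0)).compl
    rw [Measure.measure_prod_null hset]
    refine Filter.Eventually.of_forall fun a => ?_
    have := claim1 a
    rw [ae_iff] at this
    simpa [Set.preimage] using this
  -- conclusion at points where `G` vanishes
  filter_upwards [hae] with z hz
  obtain ⟨a, b⟩ := z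
  simp only at hz ⊢
  have hc0 : (0 : ℝ≥0∞) < volume (Metric.ball (0 : EuclideanSpace ℝ (Fin dy)) 1) :=
    measure_ball_pos _ _ one_pos
  have hctop : volume (Metric.ball (0 : EuclideanSpace ℝ (Fin dy)) 1) ≠ ⊤ :=
    measure_ball_lt_top.ne
  set c := (volume (Metric.ball (0 : EuclideanSpace ℝ (Fin dy)) 1)).toReal with hcdef
  have hcpos : 0 < c := ENNReal.toReal_pos hc0.ne' hctop
  rw [Metric.tendsto_nhds]
  intro η hη
  set η' := η / (2 ^ dy + 1) with hη'def
  have hη'0 : 0 < η' := by positivity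
  have h2η' : (2 : ℝ) ^ dy * η' < η := by
    have h1 : (0 : ℝ) < 2 ^ dy + 1 := by positivity
    rw [hη'def, ← mul_div_assoc, div_lt_iff₀ h1]
    nlinarith [pow_pos (show (0:ℝ) < 2 by norm_num) dy]
  obtain ⟨m, hm⟩ : ∃ m : ℕ, S m (a, b) < ENNReal.ofReal η' := by
    refine iInf_lt_iff.1 ?_
    rw [show (⨅ m : ℕ, S m (a, b)) = G (a, b) from rfl, hz]
    exact ENNReal.ofReal_pos.2 hη'0
  have hδpos : (0 : ℝ) < 1 / (2 * (m + 1)) := by positivity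
  filter_upwards [Ioo_mem_nhdsGT_of_mem (Set.mem_Ico.2 ⟨le_refl (0:ℝ), hδpos⟩)] with ε hε
  obtain ⟨hε0, hεδ⟩ := hε
  have hεm : ε < 1 / (m + 1 : ℝ) := by
    have h12 : (1 : ℝ) / (2 * (m + 1)) ≤ 1 / (m + 1) := by
      apply one_div_le_one_div_of_le
      · positivity
      · nlinarith
    linarith
  obtain ⟨q, hq1, hq2⟩ := exists_rat_btwn (lt_min (by linarith : ε < 2 * ε) hεm)
  have hq0 : 0 < (q : ℝ) := hε0.trans hq1
  have hq2ε : (q : ℝ) < 2 * ε := hq2.trans_le (min_le_left _ _)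
  have hqm : (q : ℝ) < 1 / (m + 1 : ℝ) := hq2.trans_le (min_le_right _ _)
  have hΦq : Φ (q : ℝ) (a, b) < ENNReal.ofReal η' :=
    lt_of_le_of_lt (le_iSup (fun q' : {q : ℚ // 0 < (q : ℝ) ∧ (q : ℝ) < 1 / (m + 1)} =>
      Φ (q' : ℝ) (a, b)) ⟨q, hq0, hqm⟩) hm
  -- volumes
  have hVε : (volume (Metric.ball b ε)).toReal = ε ^ dy * c := by
    rw [Measure.addHaar_ball_of_pos volume b hε0, finrank_euclideanSpace_fin,
      ENNReal.toReal_mul, ENNReal.toReal_ofReal (by positivity)]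
  have hVq : (volume (Metric.ball b (q : ℝ))).toReal = (q : ℝ) ^ dy * c := by
    rw [Measure.addHaar_ball_of_pos volume b hq0, finrank_euclideanSpace_fin,
      ENNReal.toReal_mul, ENNReal.toReal_ofReal (by positivity)]
  have hVεpos : 0 < (volume (Metric.ball b ε)).toReal := by rw [hVε]; positivity
  -- integrability
  have hint_q : IntegrableOn (fun u => |g a u - g a b|) (Metric.ball b (q : ℝ)) volume :=
    (((hgint a).integrableOn).sub (integrableOn_const measure_ball_lt_top.ne)).abs
  have hint_ε : IntegrableOn (g a) (Metric.ball b ε) volume := (hgint a).integrableOn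
  -- rewrite the difference
  have hdiff : (volume (Metric.ball b ε)).toReal⁻¹ * (∫ u in Metric.ball b ε, g a u) - g a b =
      (volume (Metric.ball b ε)).toReal⁻¹ * ∫ u in Metric.ball b ε, (g a u - g a b) := by
    rw [integral_sub hint_ε (integrableOn_const measure_ball_lt_top.ne),
      setIntegral_const, measureReal_def, smul_eq_mul, mul_sub, ← mul_assoc,
      inv_mul_cancel₀ hVεpos.ne', one_mul]
  rw [Real.dist_eq, hdiff]
  -- the chain of estimates
  have hb1 : |(volume (Metric.ball b ε)).toReal⁻¹ * ∫ u in Metric.ball b ε, (g a u - g a b)| ≤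
      (volume (Metric.ball b ε)).toReal⁻¹ * ∫ u in Metric.ball b ε, |g a u - g a b| := by
    rw [abs_mul, abs_of_nonneg (inv_nonneg.2 ENNReal.toReal_nonneg)]
    gcongr
    have := norm_integral_le_integral_norm
      (μ := volume.restrict (Metric.ball b ε)) (fun u => g a u - g a b)
    simpa [Real.norm_eq_abs] using this
  have hb2 : (∫ u in Metric.ball b ε, |g a u - g a b|) ≤
      ∫ u in Metric.ball b (q : ℝ), |g a u - g a b| :=
    setIntegral_mono_set hint_q (Filter.Eventually.of_forall fun u => abs_nonneg _)
      (HasSubset.Subset.eventuallyLE (Metric.ball_subset_ball hq1.le))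
  -- express the integral via Φ
  have hVq0 : volume (Metric.ball b (q : ℝ)) ≠ 0 := (measure_ball_pos _ _ hq0).ne'
  have hVqtop : volume (Metric.ball b (q : ℝ)) ≠ ⊤ := measure_ball_lt_top.ne
  have hmulΦ : volume (Metric.ball b (q : ℝ)) * Φ (q : ℝ) (a, b) =
      ∫⁻ u in Metric.ball b (q : ℝ), ENNReal.ofReal |g a u - g a b| := by
    rw [hΦdef]
    simp only
    rw [← mul_assoc, ENNReal.mul_inv_cancel hVq0 hVqtop, one_mul]
  have hIq : (∫ u in Metric.ball b (q : ℝ), |g a u - g a b|) =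
      (volume (Metric.ball b (q : ℝ))).toReal * (Φ (q : ℝ) (a, b)).toReal := by
    have hl : ENNReal.ofReal (∫ u in Metric.ball b (q : ℝ), |g a u - g a b|) =
        ∫⁻ u in Metric.ball b (q : ℝ), ENNReal.ofReal |g a u - g a b| :=
      ofReal_integral_eq_lintegral_ofReal hint_q
        (Filter.Eventually.of_forall fun u => abs_nonneg _)
    rw [← ENNReal.toReal_mul, hmulΦ, ← hl,
      ENNReal.toReal_ofReal (integral_nonneg fun u => abs_nonneg _)]
  have hΦt : (Φ (q : ℝ) (a, b)).toReal < η' := ENNReal.toReal_lt_of_lt_ofReal hΦq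
  have hΦt0 : 0 ≤ (Φ (q : ℝ) (a, b)).toReal := ENNReal.toReal_nonneg
  have hratio : (volume (Metric.ball b ε)).toReal⁻¹ *
      (volume (Metric.ball b (q : ℝ))).toReal ≤ 2 ^ dy := by
    rw [hVε, hVq, inv_mul_le_iff₀ (by positivity)]
    calc (q : ℝ) ^ dy * c ≤ (2 * ε) ^ dy * c :=
          mul_le_mul_of_nonneg_right (pow_le_pow_left₀ hq0.le hq2ε.le dy) hcpos.le
      _ = ε ^ dy * c * 2 ^ dy := by rw [mul_pow]; ring
  calc |(volume (Metric.ball b ε)).toReal⁻¹ * ∫ u in Metric.ball b ε, (g a u - g a b)|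
      ≤ (volume (Metric.ball b ε)).toReal⁻¹ * ∫ u in Metric.ball b ε, |g a u - g a b| := hb1
    _ ≤ (volume (Metric.ball b ε)).toReal⁻¹ * ∫ u in Metric.ball b (q : ℝ), |g a u - g a b| := by
        gcongr
    _ = ((volume (Metric.ball b ε)).toReal⁻¹ * (volume (Metric.ball b (q : ℝ))).toReal) *
          (Φ (q : ℝ) (a, b)).toReal := by rw [hIq, mul_assoc]
    _ ≤ 2 ^ dy * (Φ (q : ℝ) (a, b)).toReal := by
        exact mul_le_mul_of_nonneg_right hratio hΦt0
    _ < 2 ^ dy * η' := by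
        apply mul_lt_mul_of_pos_left hΦt
        positivity
    _ < η := h2η'

/-- pointwise a.e. convergence of the ABC likelihood. If each
`p_i(y_{1:i-1}, ·)` is a conditional probability density on `ℝ^{d_y}` (measurable jointly,
depending on the record only through the first `i−1` coordinates), and
`p_i^ε(y_i | y_{1:i-1}) := λ(B(y_i,ε))⁻¹ ∫_{B(y_i,ε)} p_i(y_{1:i-1}, u) du`, then for
Lebesgue-a.e. `(y_1, …, y_n)` one has
`∏_i p_i^ε(y_i | y_{1:i-1}) → ∏_i p_i(y_{1:i-1}, y_i)` as `ε ↓ 0`. -/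
theorem abc_likelihood_pointwise_convergence
    (dy n : ℕ) (hn : 1 ≤ n)
    (p : Fin n → (Fin n → EuclideanSpace ℝ (Fin dy)) → EuclideanSpace ℝ (Fin dy) → ℝ)
    (hp_meas : ∀ i, Measurable (fun q :
        (Fin n → EuclideanSpace ℝ (Fin dy)) × EuclideanSpace ℝ (Fin dy) => p i q.1 q.2))
    (hp_nonneg : ∀ i y u, 0 ≤ p i y u)
    (hp_int : ∀ i y, Integrable (p i y))
    (hp_dens : ∀ i y, ∫ u, p i y u = 1)
    (hp_past : ∀ (i : Fin n) y y' u, (∀ j : Fin n, j < i → y j = y' j) →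
      p i y u = p i y' u) :
    ∀ᵐ y : Fin n → EuclideanSpace ℝ (Fin dy) ∂volume,
      Tendsto (fun ε : ℝ =>
          ∏ i, ((volume (Metric.ball (y i) ε)).toReal⁻¹ *
            ∫ u in Metric.ball (y i) ε, p i y u))
        (𝓝[>] 0) (𝓝 (∏ i, p i y (y i))) := by
  classical
  have main : ∀ i : Fin n, ∀ᵐ y : Fin n → EuclideanSpace ℝ (Fin dy) ∂volume,
      Tendsto (fun ε : ℝ => (volume (Metric.ball (y i) ε)).toReal⁻¹ *
          ∫ u in Metric.ball (y i) ε, p i y u) (𝓝[>] 0) (𝓝 (p i y (y i))) := by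
    intro i
    letI huniq : Unique {j : Fin n // ¬ j ≠ i} :=
      ⟨⟨⟨i, not_not_intro rfl⟩⟩, fun j => Subtype.ext (not_not.1 j.2)⟩
    set g : ({j : Fin n // j ≠ i} → EuclideanSpace ℝ (Fin dy)) →
        EuclideanSpace ℝ (Fin dy) → ℝ := fun a u =>
      p i (fun j => if h : j = i then 0 else a ⟨j, h⟩) u with hgdef
    have hgmeas : Measurable fun q :
        (({j : Fin n // j ≠ i} → EuclideanSpace ℝ (Fin dy)) × EuclideanSpace ℝ (Fin dy)) =>
        g q.1 q.2 := by
      have hm : Measurable fun q :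
          (({j : Fin n // j ≠ i} → EuclideanSpace ℝ (Fin dy)) × EuclideanSpace ℝ (Fin dy)) =>
          ((fun j : Fin n => if h : j = i then (0 : EuclideanSpace ℝ (Fin dy))
            else q.1 ⟨j, h⟩), q.2) := by
        refine Measurable.prodMk ?_ measurable_snd
        apply measurable_pi_lambda
        intro j
        by_cases h : j = i
        · simp only [dif_pos h]; exact measurable_const
        · simp only [dif_neg h]
          exact (measurable_pi_apply _).comp measurable_fst
      exact (hp_meas i).comp hm
    have hgint : ∀ a, Integrable (g a) := fun a => hp_int i _
    have KEY := abc_key dy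
      (Measure.pi fun _ : {j : Fin n // j ≠ i} => (volume : Measure (EuclideanSpace ℝ (Fin dy))))
      g hgmeas hgint
    -- the splitting map is measure preserving
    have hMP : MeasurePreserving
        (fun y : Fin n → EuclideanSpace ℝ (Fin dy) =>
          ((fun j : {j : Fin n // j ≠ i} => y j.1, y i) :
            ({j : Fin n // j ≠ i} → EuclideanSpace ℝ (Fin dy)) × EuclideanSpace ℝ (Fin dy)))
        volume
        ((Measure.pi fun _ : {j : Fin n // j ≠ i} =>
          (volume : Measure (EuclideanSpace ℝ (Fin dy)))).prod volume) := by
      have h1 := measurePreserving_piEquivPiSubtypeProd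
        (fun _ : Fin n => (volume : Measure (EuclideanSpace ℝ (Fin dy)))) (fun j => j ≠ i)
      have h2 := @measurePreserving_funUnique (EuclideanSpace ℝ (Fin dy)) _
        (volume : Measure (EuclideanSpace ℝ (Fin dy))) {j : Fin n // ¬ j ≠ i} huniq
      have h3 := (MeasurePreserving.id (Measure.pi fun _ : {j : Fin n // j ≠ i} =>
        (volume : Measure (EuclideanSpace ℝ (Fin dy))))).prod h2
      rw [show (volume : Measure (Fin n → EuclideanSpace ℝ (Fin dy))) =
        Measure.pi fun _ => volume from volume_pi]
      have h2' : MeasurePreserving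
          (MeasurableEquiv.funUnique {j : Fin n // ¬ j ≠ i} (EuclideanSpace ℝ (Fin dy)))
          (Measure.pi fun _ : {j : Fin n // ¬ j ≠ i} =>
            (volume : Measure (EuclideanSpace ℝ (Fin dy))))
          (volume : Measure (EuclideanSpace ℝ (Fin dy))) := by
        convert h2 using 2
        rfl
      have h3' := (MeasurePreserving.id (Measure.pi fun _ : {j : Fin n // j ≠ i} =>
        (volume : Measure (EuclideanSpace ℝ (Fin dy))))).prod h2'
      have h4 := h3'.comp h1
      have hfe : (Prod.map id ⇑(MeasurableEquiv.funUnique {j : Fin n // ¬ j ≠ i}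
          (EuclideanSpace ℝ (Fin dy))) ∘
          ⇑(MeasurableEquiv.piEquivPiSubtypeProd
            (fun _ : Fin n => EuclideanSpace ℝ (Fin dy)) (fun j => j ≠ i))) =
          fun y : Fin n → EuclideanSpace ℝ (Fin dy) =>
            ((fun j : {j : Fin n // j ≠ i} => y j.1, y i) :
              ({j : Fin n // j ≠ i} → EuclideanSpace ℝ (Fin dy)) ×
                EuclideanSpace ℝ (Fin dy)) := by
        funext y
        rfl
      rw [← hfe]
      exact h4
    have hQ := hMP.quasiMeasurePreserving.ae KEY
    filter_upwards [hQ] with y hy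
    have hpe : ∀ u, g (fun j : {j : Fin n // j ≠ i} => y j.1) u = p i y u := by
      intro u
      apply hp_past
      intro j hj
      simp [dif_neg (ne_of_lt hj)]
    simpa only [hpe] using hy
  filter_upwards [ae_all_iff.2 main] with y hy
  exact tendsto_finset_prod _ fun i _ => hy i
end

section
/- Let n ≥ 1, let N ≥ 2 be an integer, and let α_1, …, α_n ∈ (0,1]. Then Σ_{m_1 = N}^∞ ⋯ Σ_{m_n = N}^∞ ∏_{i=1}^n [ ((N−1)/(m_i−1)) · C(m_i−1, N−1) · α_i^N · (1−α_i)^{m_i−N} ] = ∏_{i=1}^n α_i, where C(a,b) denotes the binomial coefficient. Consequently, the extended target π̂^ε(θ, m_{1:n} | y_{1:n}) ∝ π(θ) ∏_{i=1}^n [ (N−1)/((m_i−1) λ(B(y_i,ε))) ] · ∏_{i=1}^n C(m_i−1, N−1) α_i(y_i,θ,ε)^N (1−α_i(y_i,θ,ε))^{m_i−N} has θ-marginal proportional to π(θ) ∏_{i=1}^n α_i(y_i,θ,ε)/λ(B(y_i,ε)), i.e. the ABC posterior π^ε(θ | y_{1:n}). -/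
open MeasureTheory

/-- The one-dimensional negative-binomial summand. -/
noncomputable def nbF (N : ℕ) (a : ℝ) (m : ℕ) : ℝ :=
  if N ≤ m then
    (((N : ℝ) - 1) / ((m : ℝ) - 1)) * ((m - 1).choose (N - 1) : ℝ) *
      a ^ N * (1 - a) ^ (m - N)
  else 0

lemma nbF_of_le {N m : ℕ} (a : ℝ) (h : N ≤ m) :
    nbF N a m = (((N : ℝ) - 1) / ((m : ℝ) - 1)) * ((m - 1).choose (N - 1) : ℝ) *
      a ^ N * (1 - a) ^ (m - N) := if_pos h

lemma nbF_of_lt {N m : ℕ} (a : ℝ) (h : ¬ N ≤ m) : nbF N a m = 0 := if_neg h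

lemma hasSum_negBinom (N : ℕ) (hN : 2 ≤ N) {a : ℝ} (h0 : 0 < a) (h1 : a ≤ 1) :
    HasSum (nbF N a) a := by
  obtain ⟨s, rfl⟩ : ∃ s, N = s + 2 := ⟨N - 2, by omega⟩
  have hr : ‖1 - a‖ < 1 := by
    rw [Real.norm_eq_abs, abs_lt]; constructor <;> linarith
  have H := (hasSum_choose_mul_geometric_of_norm_lt_one s hr).mul_right (a ^ (s + 2))
  have hval : 1 / (1 - (1 - a)) ^ (s + 1) * a ^ (s + 2) = a := by
    have h : (1 : ℝ) - (1 - a) = a := by ring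
    rw [h, div_mul_eq_mul_div, one_mul, pow_succ]
    field_simp
  rw [hval] at H
  have hinj : Function.Injective (fun k : ℕ => k + (s + 2)) :=
    add_left_injective (s + 2)
  refine (hinj.hasSum_iff ?_).1 ?_
  · intro m hm
    have hnle : ¬ (s + 2 ≤ m) := by
      intro h
      exact hm ⟨m - (s + 2), show m - (s + 2) + (s + 2) = m by omega⟩
    exact nbF_of_lt a hnle
  · convert H using 1
    · rfl
    funext k
    simp only [Function.comp]
    rw [nbF_of_le a (by omega : s + 2 ≤ k + (s + 2))]
    have e1 : k + (s + 2) - 1 = k + s + 1 := by omega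
    have e2 : s + 2 - 1 = s + 1 := by omega
    have e3 : k + (s + 2) - (s + 2) = k := by omega
    rw [e1, e2, e3]
    have hchoose : ((k + s + 1 : ℕ) : ℝ) * ((k + s).choose s : ℝ) =
        ((k + s + 1).choose (s + 1) : ℝ) * ((s + 1 : ℕ) : ℝ) := by
      exact_mod_cast congrArg (Nat.cast (R := ℝ)) (Nat.add_one_mul_choose_eq (k + s) s)
    have hne : ((k + (s + 2) : ℕ) : ℝ) - 1 ≠ 0 := by
      have : (0:ℝ) < ((k + (s + 2) : ℕ) : ℝ) - 1 := by
        have : (2:ℝ) ≤ ((k + (s + 2) : ℕ) : ℝ) := by exact_mod_cast (by omega : 2 ≤ k + (s + 2))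
        linarith
      exact ne_of_gt this
    rw [div_mul_eq_mul_div, div_mul_eq_mul_div, div_mul_eq_mul_div, div_eq_iff hne]
    push_cast at hchoose ⊢
    linear_combination (-((1 - a) ^ k * a ^ (s + 2))) * hchoose

set_option maxHeartbeats 1000000 in
lemma hasSum_pi_prod {n : ℕ} (f : Fin n → ℕ → ℝ) (a : Fin n → ℝ)
    (hpos : ∀ i k, 0 ≤ f i k) (h : ∀ i, HasSum (f i) (a i)) :
    HasSum (fun m : Fin n → ℕ => ∏ i, f i (m i)) (∏ i, a i) := by
  induction n with
  | zero =>
      have h1 : (fun m : Fin 0 → ℕ => ∏ i, f i (m i)) = fun _ => 1 := by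
        funext m; simp
      rw [h1]
      simpa using hasSum_fintype (fun _ : Fin 0 → ℕ => (1 : ℝ))
  | succ n ih =>
      have h1 := h 0
      have h2 : HasSum (fun m : Fin n → ℕ => ∏ i : Fin n, f i.succ (m i))
          (∏ i : Fin n, a i.succ) :=
        ih (fun i => f i.succ) (fun i => a i.succ)
          (fun i k => hpos i.succ k) (fun i => h i.succ)
      obtain ⟨g2, hg2⟩ : ∃ g2, g2 = fun m : Fin n → ℕ => ∏ i : Fin n, f i.succ (m i) :=
        ⟨_, rfl⟩
      have h2' : HasSum g2 (∏ i : Fin n, a i.succ) := by rw [hg2]; exact h2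
      have hn1 : Summable fun k => ‖f 0 k‖ := summable_norm_iff.mpr h1.summable
      have hn2 : Summable fun m => ‖g2 m‖ := summable_norm_iff.mpr h2'.summable
      have hmul := h1.mul h2' (summable_mul_of_summable_norm hn1 hn2)
      have hkey := ((Fin.consEquiv fun _ => ℕ).symm.hasSum_iff).2 hmul
      have hfun : (fun m : Fin (n + 1) → ℕ => ∏ i, f i (m i)) =
          (fun p : ℕ × (Fin n → ℕ) => f 0 p.1 * g2 p.2) ∘ (Fin.consEquiv fun _ => ℕ).symm := by
        funext m
        simp only [Function.comp, Fin.consEquiv, Equiv.coe_fn_symm_mk, hg2]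
        rw [Fin.prod_univ_succ]
        rfl
      rw [hfun, Fin.prod_univ_succ]
      exact hkey

/-- the `n`-fold negative binomial unbiasedness identity
`Σ_{m_1,…,m_n ≥ N} ∏_i ((N−1)/(m_i−1)) C(m_i−1, N−1) α_i^N (1−α_i)^{m_i−N} = ∏_i α_i`,
and consequently the extended target
`π̂^ε(θ, m_{1:n}|y_{1:n}) ∝ π(θ) ∏_i (N−1)/((m_i−1) λ(B(y_i,ε))) ∏_i C(m_i−1,N−1) α_i^N (1−α_i)^{m_i−N}`
of the MCMC kernel with a random number of trials has `θ`-marginal proportional to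
`π(θ) ∏_i α_i / λ(B(y_i,ε))`, i.e. the ABC posterior. -/
theorem negBinom_target_marginal
    (n N : ℕ) (hn : 1 ≤ n) (hN : 2 ≤ N)
    (α : Fin n → ℝ) (hα : ∀ i, α i ∈ Set.Ioc (0 : ℝ) 1)
    (d : ℕ) (ε : ℝ) (hε : 0 < ε) (y : Fin n → EuclideanSpace ℝ (Fin d))
    (pri : ℝ) :
    ((∑' m : Fin n → ℕ, if ∀ i, N ≤ m i then
        ∏ i, ((((N : ℝ) - 1) / ((m i : ℝ) - 1)) * ((m i - 1).choose (N - 1) : ℝ) *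
          α i ^ N * (1 - α i) ^ (m i - N))
      else 0) = ∏ i, α i) ∧
    ((∑' m : Fin n → ℕ, if ∀ i, N ≤ m i then
        pri * (∏ i, ((N : ℝ) - 1) /
            (((m i : ℝ) - 1) * (volume (Metric.ball (y i) ε)).toReal)) *
          ∏ i, (((m i - 1).choose (N - 1) : ℝ) * α i ^ N * (1 - α i) ^ (m i - N))
      else 0)
      = pri * ∏ i, α i / (volume (Metric.ball (y i) ε)).toReal) := by
  set v : Fin n → ℝ := fun i => (volume (Metric.ball (y i) ε)).toReal with hv
  have hfs : ∀ i, HasSum (nbF N (α i)) (α i) :=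
    fun i => hasSum_negBinom N hN (hα i).1 (hα i).2
  have hfpos : ∀ (i : Fin n) (k : ℕ), 0 ≤ nbF N (α i) k := by
    intro i k
    by_cases h : N ≤ k
    · rw [nbF_of_le _ h]
      have h1 := (hα i).1
      have h2 := (hα i).2
      have hdiv : (0:ℝ) ≤ ((N : ℝ) - 1) / ((k : ℝ) - 1) := by
        apply div_nonneg
        · have : (2:ℝ) ≤ (N:ℝ) := by exact_mod_cast hN
          linarith
        · have hk : (N:ℝ) ≤ (k:ℝ) := by exact_mod_cast h
          have : (2:ℝ) ≤ (N:ℝ) := by exact_mod_cast hN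
          linarith
      exact mul_nonneg (mul_nonneg (mul_nonneg hdiv (Nat.cast_nonneg _))
        (pow_nonneg h1.le N)) (pow_nonneg (by linarith) _)
    · rw [nbF_of_lt _ h]
  have hkey := hasSum_pi_prod (fun i => nbF N (α i)) α hfpos hfs
  have heq1 : ∀ m : Fin n → ℕ,
      (if ∀ i, N ≤ m i then
        ∏ i, ((((N : ℝ) - 1) / ((m i : ℝ) - 1)) * ((m i - 1).choose (N - 1) : ℝ) *
          α i ^ N * (1 - α i) ^ (m i - N))
      else 0) = ∏ i, nbF N (α i) (m i) := by
    intro m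
    by_cases h : ∀ i, N ≤ m i
    · rw [if_pos h]
      exact Finset.prod_congr rfl fun i _ => (nbF_of_le _ (h i)).symm
    · rw [if_neg h]
      push_neg at h
      obtain ⟨i0, hi0⟩ := h
      exact (Finset.prod_eq_zero (Finset.mem_univ i0) (nbF_of_lt (α i0) (show ¬ N ≤ m i0 by omega))).symm
  have part1 : (∑' m : Fin n → ℕ, if ∀ i, N ≤ m i then
        ∏ i, ((((N : ℝ) - 1) / ((m i : ℝ) - 1)) * ((m i - 1).choose (N - 1) : ℝ) *
          α i ^ N * (1 - α i) ^ (m i - N))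
      else 0) = ∏ i, α i := by
    rw [tsum_congr heq1]
    exact hkey.tsum_eq
  refine ⟨part1, ?_⟩
  have heq2 : ∀ m : Fin n → ℕ,
      (if ∀ i, N ≤ m i then
        pri * (∏ i, ((N : ℝ) - 1) / (((m i : ℝ) - 1) * v i)) *
          ∏ i, (((m i - 1).choose (N - 1) : ℝ) * α i ^ N * (1 - α i) ^ (m i - N))
      else 0) = (pri * ∏ i, (v i)⁻¹) * ∏ i, nbF N (α i) (m i) := by
    intro m
    by_cases h : ∀ i, N ≤ m i
    · rw [if_pos h]
      have hA : (∏ i, ((N : ℝ) - 1) / (((m i : ℝ) - 1) * v i)) =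
          (∏ i, (v i)⁻¹) * ∏ i, ((N : ℝ) - 1) / ((m i : ℝ) - 1) := by
        rw [← Finset.prod_mul_distrib]
        exact Finset.prod_congr rfl fun i _ => by
          rw [div_eq_mul_inv, div_eq_mul_inv, mul_inv]
          ring
      have hB : ∏ i, nbF N (α i) (m i) =
          (∏ i, ((N : ℝ) - 1) / ((m i : ℝ) - 1)) *
            ∏ i, (((m i - 1).choose (N - 1) : ℝ) * α i ^ N *
              (1 - α i) ^ (m i - N)) := by
        rw [← Finset.prod_mul_distrib]
        exact Finset.prod_congr rfl fun i _ => by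
          rw [nbF_of_le _ (h i)]; ring
      rw [hA, hB]
      ring
    · rw [if_neg h]
      push_neg at h
      obtain ⟨i0, hi0⟩ := h
      have hz : ∏ i, nbF N (α i) (m i) = 0 :=
        Finset.prod_eq_zero (Finset.mem_univ i0) (nbF_of_lt (α i0) (show ¬ N ≤ m i0 by omega))
      rw [hz, mul_zero]
  calc (∑' m : Fin n → ℕ, if ∀ i, N ≤ m i then
        pri * (∏ i, ((N : ℝ) - 1) / (((m i : ℝ) - 1) * v i)) *
          ∏ i, (((m i - 1).choose (N - 1) : ℝ) * α i ^ N * (1 - α i) ^ (m i - N))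
      else 0)
      = ∑' m : Fin n → ℕ, (pri * ∏ i, (v i)⁻¹) * ∏ i, nbF N (α i) (m i) :=
        tsum_congr heq2
    _ = (pri * ∏ i, (v i)⁻¹) * ∏ i, α i := by
        rw [tsum_mul_left, hkey.tsum_eq]
    _ = pri * ∏ i, α i / v i := by
        rw [mul_assoc, ← Finset.prod_mul_distrib]
        congr 1
        exact Finset.prod_congr rfl fun i _ => by rw [div_eq_mul_inv]; ring
end
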